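/- Let A be a totally unimodular matrix with columns indexed by E, and let P be a vector in ker(A) with all entries in {-1,0,1}. Then P can be written as a finite sum of signed circuits of A (i.e., {-1,0,1}-vectors in ker(A) with support-minimal nonzero support) whose supports are pairwise disjoint, and such that each signed circuit agrees in sign with P on its support. -/

import Mathlib

open Matrix

/-- The support of a vector. -/
def supp {α : Type*} (v : α → ℝ) : Set α := {x | v x ≠ 0}

/-- A vector is simple if all entries lie in `{-1,0,1}`. -/
def Simple {α : Type*} (v : α → ℝ) : Prop := ∀ x, v x = -1 ∨ v x = 0 ∨ v x = 1

/-- A signed circuit of the regular matroid realized by `A`: a simple kernel vector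
with support minimal among supports of nonzero kernel vectors. -/
def SignedCircuit {m E : Type*} [Fintype E] (A : Matrix m E ℝ) (C : E → ℝ) : Prop :=
  A.mulVec C = 0 ∧ C ≠ 0 ∧ Simple C ∧
    ∀ D : E → ℝ, A.mulVec D = 0 → D ≠ 0 → supp D ⊆ supp C → supp D = supp C

/-- A signed cocircuit: a simple row-space vector with support minimal among
supports of nonzero row-space vectors. -/
def SignedCocircuit {m E : Type*} [Fintype m] (A : Matrix m E ℝ) (C : E → ℝ) : Prop :=
  (∃ y, Matrix.vecMul y A = C) ∧ C ≠ 0 ∧ Simple C ∧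
    ∀ D : E → ℝ, (∃ y, Matrix.vecMul y A = D) → D ≠ 0 → supp D ⊆ supp C → supp D = supp C

lemma exists_invertible_row_submatrix {m ι : Type*} [Fintype m] [Fintype ι] [DecidableEq ι]
    (M : Matrix m ι ℝ) (h : LinearIndependent ℝ (fun j => Mᵀ j)) :
    ∃ r : ι → m, IsUnit (M.submatrix r id) := by
  classical
  have hrankT : Mᵀ.rank = Fintype.card ι := LinearIndependent.rank_matrix h
  have hrank : M.rank = Fintype.card ι := by rw [← Matrix.rank_transpose]; exact hrankT
  have hspan : Submodule.span ℝ (Set.range M) = ⊤ := by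
    apply Submodule.eq_top_of_finrank_eq
    rw [show Set.range M = Set.range M.row from rfl, ← Matrix.rank_eq_finrank_span_row, hrank, Module.finrank_fintype_fun_eq_card]
  obtain ⟨b, hbsub, hbspan, hbind⟩ := exists_linearIndependent ℝ (Set.range M)
  rw [hspan] at hbspan
  let bas : Module.Basis b ℝ (ι → ℝ) := Module.Basis.mk hbind (by rw [Subtype.range_coe, hbspan])
  haveI : Fintype b := FiniteDimensional.fintypeBasisIndex bas
  have hcard : Fintype.card b = Fintype.card ι := by
    rw [← Module.finrank_eq_card_basis bas, Module.finrank_fintype_fun_eq_card]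
  let e : ι ≃ b := (Fintype.equivOfCardEq hcard).symm
  have hchoose : ∀ v : b, M (hbsub v.2).choose = (v : ι → ℝ) := fun v => (hbsub v.2).choose_spec
  refine ⟨fun j => (hbsub (e j).2).choose, ?_⟩
  rw [← Matrix.linearIndependent_rows_iff_isUnit]
  have : (fun i => (M.submatrix (fun j => (hbsub (e j).2).choose) id) i)
      = fun j => ((e j : b) : ι → ℝ) := by
    funext j; ext k; rw [Matrix.submatrix_apply, id_eq, hchoose (e j)]
  rw [show (M.submatrix (fun j => (hbsub (e j).2).choose) id).row = fun j => ((e j : b) : ι → ℝ) from this]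
  exact hbind.comp e e.injective

lemma sign_mem_cases {x : ℝ} (hx : x ∈ Set.range (SignType.cast : SignType → ℝ)) :
    x = -1 ∨ x = 0 ∨ x = 1 := by
  obtain ⟨s, rfl⟩ := hx
  cases s <;> simp

lemma tu_minimal_support_scaled {m E : Type*} [Fintype m] [Fintype E]
    (A : Matrix m E ℝ) (hA : A.IsTotallyUnimodular) (Q : E → ℝ)
    (hQker : A.mulVec Q = 0)
    (hmin : ∀ D : E → ℝ, A.mulVec D = 0 → D ≠ 0 → supp D ⊆ supp Q → supp D = supp Q)
    (e : E) (he : Q e ≠ 0) :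
    ∀ f, Q f = 0 ∨ Q f = Q e ∨ Q f = -Q e := by
  classical
  set p : E → Prop := fun f => Q f ≠ 0 ∧ f ≠ e with hp
  let ι := {f : E // p f}
  let M : Matrix m ι ℝ := A.submatrix id (fun k : ι => (k : E))
  -- columns of M are linearly independent
  have hcols : LinearIndependent ℝ (fun j : ι => Mᵀ j) := by
    rw [Fintype.linearIndependent_iff]
    intro g hg
    set D : E → ℝ := fun f => if h : p f then g ⟨f, h⟩ else 0 with hD
    have hDker : A.mulVec D = 0 := by
      funext i
      have hg' : ∑ j : ι, g j * A i (j : E) = 0 := by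
        have := congrFun hg i
        simpa [Matrix.transpose_apply, M, mul_comm] using this
      have hsum : ∑ f : E, A i f * D f = ∑ j : ι, A i (j : E) * D (j : E) := by
        rw [← Finset.sum_subtype (Finset.univ.filter p) (by simp) (fun f => A i f * D f)]
        symm
        apply Finset.sum_subset (Finset.subset_univ _)
        intro f _ hf
        have hnp : ¬ p f := by simpa using hf
        simp [hD, hnp]
      have hDg : ∀ j : ι, D (j : E) = g j := by
        intro j
        rw [hD]
        simp only
        rw [dif_pos j.2]
      simp only [Matrix.mulVec, dotProduct, Pi.zero_apply]
      rw [hsum]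
      calc ∑ j : ι, A i (j : E) * D (j : E) = ∑ j : ι, g j * A i (j : E) :=
            Finset.sum_congr rfl (fun j _ => by rw [hDg j]; ring)
        _ = 0 := hg'

    have hD0 : D = 0 := by
      by_contra hne
      have hsub : supp D ⊆ supp Q := by
        intro f hf
        simp only [supp, Set.mem_setOf_eq] at hf ⊢
        by_contra hQf
        apply hf
        rw [hD]; simp only
        rw [dif_neg]
        intro hpf; exact hpf.1 hQf
      have := hmin D hDker hne hsub
      have heD : D e ≠ 0 := by
        have : e ∈ supp D := by rw [this]; exact he
        exact this
      apply heD
      rw [hD]; simp only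
      rw [dif_neg]
      intro hpf; exact hpf.2 rfl
    intro j
    have hDg : D (j : E) = g j := by
      rw [hD]; simp only; rw [dif_pos j.2]
    rw [← hDg]
    exact congrFun hD0 (j : E)
  obtain ⟨r, hB⟩ := exists_invertible_row_submatrix M hcols
  set B : Matrix ι ι ℝ := M.submatrix r id with hBdef
  have hBapp : ∀ j k : ι, B j k = A (r j) (k : E) := fun j k => rfl
  set cvec : ι → ℝ := fun j => -(Q e * A (r j) e) with hcvec
  have hBq : B.mulVec (fun k : ι => Q k) = cvec := by
    funext j
    have h0 : ∑ f : E, A (r j) f * Q f = 0 := by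
      have := congrFun hQker (r j)
      simpa [Matrix.mulVec, dotProduct] using this
    have hsplit : ∑ f : E, A (r j) f * Q f
        = ∑ f ∈ insert e (Finset.univ.filter p), A (r j) f * Q f := by
      apply (Finset.sum_subset (Finset.subset_univ _) ?_).symm
      intro f _ hf
      simp only [Finset.mem_insert, Finset.mem_filter, Finset.mem_univ, true_and, hp] at hf
      push_neg at hf
      obtain ⟨hfe, hf2⟩ := hf
      have hQf0 : Q f = 0 := by
        by_contra h
        exact hfe (hf2 h)
      rw [hQf0, mul_zero]
    have hins : ∑ f ∈ insert e (Finset.univ.filter p), A (r j) f * Q f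
        = A (r j) e * Q e + ∑ f ∈ Finset.univ.filter p, A (r j) f * Q f :=
      Finset.sum_insert (by simp [hp])
    have hsubty : ∑ f ∈ Finset.univ.filter p, A (r j) f * Q f
        = ∑ k : ι, A (r j) (k : E) * Q (k : E) :=
      Finset.sum_subtype (Finset.univ.filter p) (by simp) (fun f => A (r j) f * Q f)
    have : (B.mulVec (fun k : ι => Q k)) j = ∑ k : ι, A (r j) (k : E) * Q (k : E) := by
      simp [Matrix.mulVec, dotProduct, hBapp]
    rw [this, ← hsubty]
    have h2 : A (r j) e * Q e + ∑ f ∈ Finset.univ.filter p, A (r j) f * Q f = 0 := by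
      rw [← hins, ← hsplit]; exact h0
    show _ = -(Q e * A (r j) e)
    linarith
  have hkey : B.det • (fun k : ι => Q k) = B.cramer cvec := by
    have hinj : Function.Injective B.mulVec := Matrix.mulVec_injective_iff_isUnit.mpr hB
    apply hinj
    rw [Matrix.mulVec_smul, hBq, Matrix.mulVec_cramer]
  have hdB : B.det ∈ Set.range (SignType.cast : SignType → ℝ) := by
    have : B = A.submatrix (fun j : ι => r j) (fun k : ι => (k : E)) := rfl
    rw [this]
    exact (Matrix.isTotallyUnimodular_iff_fintype A).mp hA ι _ _
  have hdBne : B.det ≠ 0 := by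
    intro h
    exact (Matrix.isUnit_iff_isUnit_det B).mp hB |>.ne_zero h
  have hdB1 : B.det = 1 ∨ B.det = -1 := by
    rcases sign_mem_cases hdB with h | h | h
    · right; exact h
    · exact absurd h hdBne
    · left; exact h
  intro f
  by_cases hQf : Q f = 0
  · left; exact hQf
  by_cases hfe : f = e
  · right; left; rw [hfe]
  have hpf : p f := ⟨hQf, hfe⟩
  set j : ι := ⟨f, hpf⟩ with hj
  have heq : B.det * Q f = B.cramer cvec j := by
    have := congrFun hkey j
    simpa using this
  have hcv : cvec = (-(Q e)) • (fun j' : ι => A (r j') e) := by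
    funext j'; simp [hcvec]
  have hup : B.updateCol j (fun j' : ι => A (r j') e)
      = A.submatrix (fun j' : ι => r j') (fun k : ι => if k = j then e else (k : E)) := by
    ext j' k
    rw [Matrix.updateCol_apply]
    by_cases hk : k = j <;> simp [hk, hBapp]
  have hdN : (B.updateCol j (fun j' : ι => A (r j') e)).det
      ∈ Set.range (SignType.cast : SignType → ℝ) := by
    rw [hup]
    exact (Matrix.isTotallyUnimodular_iff_fintype A).mp hA ι _ _
  have heq2 : B.det * Q f = -(Q e) * (B.updateCol j (fun j' : ι => A (r j') e)).det := by
    rw [heq, Matrix.cramer_apply, hcv, Matrix.det_updateCol_smul]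
  rcases sign_mem_cases hdN with h | h | h <;> rw [h] at heq2 <;>
    rcases hdB1 with h1 | h1 <;> rw [h1] at heq2 <;>
    [skip; skip; skip; skip; skip; skip] <;>
  first
    | (right; left; linarith)
    | (right; right; linarith)
    | (exfalso; apply hQf; linarith)

lemma exists_conformal_circuit {m E : Type*} [Fintype m] [Fintype E]
    (A : Matrix m E ℝ) (hA : A.IsTotallyUnimodular) (P : E → ℝ)
    (hP : A.mulVec P = 0) (hPs : Simple P) (hP0 : P ≠ 0) :
    ∃ C : E → ℝ, SignedCircuit A C ∧ ∀ x, C x ≠ 0 → C x = P x := by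
  classical
  set 𝒬 : Set (E → ℝ) :=
    {Q | A.mulVec Q = 0 ∧ Q ≠ 0 ∧ ∀ x, Q x ≠ 0 → 0 < Q x * P x} with h𝒬
  have hP𝒬 : P ∈ 𝒬 := ⟨hP, hP0, fun x hx => mul_self_pos.mpr hx⟩
  set N : (E → ℝ) → ℕ := fun Q => (Finset.univ.filter (fun x => Q x ≠ 0)).card with hN
  have hne : {n : ℕ | ∃ Q ∈ 𝒬, N Q = n}.Nonempty := ⟨N P, P, hP𝒬, rfl⟩
  obtain ⟨Q, hQ𝒬, hQk⟩ := Nat.sInf_mem hne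
  obtain ⟨hQker, hQ0, hQsign⟩ := hQ𝒬
  have hQminN : ∀ Q' ∈ 𝒬, N Q ≤ N Q' := by
    intro Q' hQ'
    rw [hQk]
    exact Nat.sInf_le ⟨Q', hQ', rfl⟩
  -- Q has minimal support among all kernel vectors
  have hmin : ∀ D : E → ℝ, A.mulVec D = 0 → D ≠ 0 → supp D ⊆ supp Q → supp D = supp Q := by
    intro D hDker hD0 hsub
    by_contra hnemin
    obtain ⟨x0, hx0Q, hx0D⟩ := Set.exists_of_ssubset (hsub.ssubset_of_ne hnemin)
    have hx0D' : D x0 = 0 := by simpa [supp] using hx0D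
    have hx0Q' : Q x0 ≠ 0 := hx0Q
    have hsD : (Finset.univ.filter (fun x => D x ≠ 0)).Nonempty := by
      obtain ⟨y, hy⟩ := Function.ne_iff.mp hD0
      exact ⟨y, by simpa using hy⟩
    obtain ⟨y, hy, hymin⟩ := Finset.exists_min_image _ (fun x => |Q x| / |D x|) hsD
    have hDy : D y ≠ 0 := by simpa using hy
    have hQy : Q y ≠ 0 := hsub hDy
    set t : ℝ := Q y / D y with ht
    set Q' : E → ℝ := Q - t • D with hQ'
    have hbound : ∀ x, D x ≠ 0 → |t * D x| ≤ |Q x| := by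
      intro x hx
      have h1 : |Q y| / |D y| ≤ |Q x| / |D x| := hymin x (by simpa using hx)
      have h2 : |t| = |Q y| / |D y| := by rw [ht, abs_div]
      have h3 : (0:ℝ) < |D x| := abs_pos.mpr hx
      rw [abs_mul, h2]
      calc |Q y| / |D y| * |D x| ≤ |Q x| / |D x| * |D x| :=
            mul_le_mul_of_nonneg_right h1 (abs_nonneg _)
        _ = |Q x| := div_mul_cancel₀ _ (ne_of_gt h3)
    have hQ'Q : ∀ x, Q' x ≠ 0 → Q x ≠ 0 ∧ 0 < Q' x * Q x := by
      intro x hx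
      by_cases hDx : D x = 0
      · have : Q' x = Q x := by simp [hQ', hDx]
        rw [this] at hx ⊢
        exact ⟨hx, mul_self_pos.mpr hx⟩
      · have hb := hbound x hDx
        have hQx : Q x ≠ 0 := by
          intro h
          rw [h] at hb
          simp only [abs_zero] at hb
          have : t * D x = 0 := abs_nonpos_iff.mp hb
          apply hx
          simp [hQ', h, this]
        refine ⟨hQx, ?_⟩
        have hQ'xv : Q' x = Q x - t * D x := by simp [hQ']
        have h4 : Q' x * Q x ≥ 0 := by
          rw [hQ'xv]
          nlinarith [le_abs_self ((t * D x) * Q x), abs_mul (t * D x) (Q x),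
            mul_le_mul_of_nonneg_right hb (abs_nonneg (Q x)), sq_abs (Q x),
            le_abs_self (Q x), neg_abs_le (Q x)]
        rcases h4.lt_or_eq with h | h
        · exact h
        · exact absurd (mul_eq_zero.mp h.symm) (by push_neg; exact ⟨hx, hQx⟩)
    have hQ'𝒬 : Q' ∈ 𝒬 := by
      refine ⟨?_, ?_, ?_⟩
      · rw [hQ', Matrix.mulVec_sub, Matrix.mulVec_smul, hQker, hDker, smul_zero, sub_zero]
      · intro h
        have : Q' x0 = Q x0 := by simp [hQ', hx0D']
        rw [h] at this
        exact hx0Q' this.symm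
      · intro x hx
        obtain ⟨hQx, hpos⟩ := hQ'Q x hx
        have hpos2 := hQsign x hQx
        nlinarith [mul_pos hpos hpos2, mul_self_pos.mpr hQx]
    have hcard : N Q' < N Q := by
      have hy' : y ∈ Finset.univ.filter (fun x => Q x ≠ 0) := by simpa using hQy
      have hQ'y : Q' y = 0 := by
        simp only [hQ', Pi.sub_apply, Pi.smul_apply, smul_eq_mul, ht]
        field_simp
        ring
      apply Finset.card_lt_card
      rw [Finset.ssubset_iff_of_subset]
      · exact ⟨y, hy', by simpa using hQ'y⟩
      · intro x hx
        simp only [Finset.mem_filter, Finset.mem_univ, true_and] at hx ⊢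
        exact (hQ'Q x hx).1
    exact absurd (hQminN Q' hQ'𝒬) (not_le.mpr hcard)
  obtain ⟨e, he⟩ := Function.ne_iff.mp hQ0
  have he' : Q e ≠ 0 := by simpa using he
  have hscale := tu_minimal_support_scaled A hA Q hQker hmin e he'
  set C : E → ℝ := fun x => Q x / |Q e| with hC
  have habs : (0:ℝ) < |Q e| := abs_pos.mpr he'
  have hCiff : ∀ x, C x ≠ 0 ↔ Q x ≠ 0 := by
    intro x
    rw [hC]
    simp only
    rw [div_ne_zero_iff]
    constructor
    · exact fun h => h.1
    · exact fun h => ⟨h, ne_of_gt habs⟩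
  have hsuppC : supp C = supp Q := Set.ext fun x => hCiff x
  have hCsimple : Simple C := by
    intro x
    rcases hscale x with h | h | h
    · right; left; rw [hC]; simp [h]
    · rw [hC]; simp only [h]
      rcases lt_trichotomy (Q e) 0 with h' | h' | h'
      · left; rw [abs_of_neg h']; field_simp
      · exact absurd h' he'
      · right; right; rw [abs_of_pos h']; field_simp
    · rw [hC]; simp only [h]
      rcases lt_trichotomy (Q e) 0 with h' | h' | h'
      · right; right; rw [abs_of_neg h']; field_simp
      · exact absurd h' he'
      · left; rw [abs_of_pos h']; field_simp
  refine ⟨C, ⟨?_, ?_, hCsimple, ?_⟩, ?_⟩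
  · have : C = |Q e|⁻¹ • Q := by funext x; simp [hC, div_eq_inv_mul, mul_comm]
    rw [this, Matrix.mulVec_smul, hQker, smul_zero]
  · intro h
    have : C e ≠ 0 := (hCiff e).mpr he'
    rw [h] at this
    exact this rfl
  · intro D hD hD0 hsub
    rw [hsuppC] at hsub ⊢
    exact hmin D hD hD0 hsub
  · intro x hx
    have hQx : Q x ≠ 0 := (hCiff x).mp hx
    have hpos := hQsign x hQx
    have hPx : P x ≠ 0 := by intro h; rw [h, mul_zero] at hpos; exact lt_irrefl 0 hpos
    have hCP : 0 < C x * P x := by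
      rw [hC]
      simp only
      rw [div_mul_eq_mul_div]
      exact div_pos hpos habs
    rcases hCsimple x with h | h | h
    · rcases hPs x with h' | h' | h'
      · rw [h, h']
      · exact absurd h' hPx
      · rw [h, h'] at hCP; norm_num at hCP
    · exact absurd h hx
    · rcases hPs x with h' | h' | h'
      · rw [h, h'] at hCP; norm_num at hCP
      · exact absurd h' hPx
      · rw [h, h']

theorem simple_kernel_vector_decomposes_into_disjoint_conformal_circuits
    {m E : Type*} [Fintype m] [Fintype E] (A : Matrix m E ℝ)
    (hA : A.IsTotallyUnimodular) (P : E → ℝ) (hP : A.mulVec P = 0) (hPs : Simple P) :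
    ∃ (n : ℕ) (c : Fin n → (E → ℝ)),
      (∀ i, SignedCircuit A (c i)) ∧
      (Pairwise fun i j => supp (c i) ∩ supp (c j) = ∅) ∧
      (∀ i, ∀ x ∈ supp (c i), c i x = P x) ∧
      P = ∑ i, c i := by
  classical
  suffices H : ∀ (k : ℕ) (P : E → ℝ), A.mulVec P = 0 → Simple P →
      (Finset.univ.filter (fun x => P x ≠ 0)).card ≤ k →
      ∃ (n : ℕ) (c : Fin n → (E → ℝ)),
        (∀ i, SignedCircuit A (c i)) ∧
        (Pairwise fun i j => supp (c i) ∩ supp (c j) = ∅) ∧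
        (∀ i, ∀ x ∈ supp (c i), c i x = P x) ∧
        P = ∑ i, c i by
    exact H _ P hP hPs le_rfl
  intro k
  induction k with
  | zero =>
    intro P hP hPs hcard
    have hP0 : P = 0 := by
      funext x
      by_contra hx
      have : x ∈ Finset.univ.filter (fun x => P x ≠ 0) := by simpa using hx
      have := Finset.card_pos.mpr ⟨x, this⟩
      omega
    refine ⟨0, fun i => i.elim0, fun i => i.elim0, fun i => i.elim0, fun i => i.elim0, ?_⟩
    simp [hP0]
  | succ k ih =>
    intro P hP hPs hcard
    by_cases hP0 : P = 0
    · refine ⟨0, fun i => i.elim0, fun i => i.elim0, fun i => i.elim0, fun i => i.elim0, ?_⟩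
      simp [hP0]
    obtain ⟨C, hC, hconf⟩ := exists_conformal_circuit A hA P hP hPs hP0
    set P' : E → ℝ := P - C with hP'def
    have hCker := hC.1
    have hC0 := hC.2.1
    have hP'ker : A.mulVec P' = 0 := by
      rw [hP'def, Matrix.mulVec_sub, hP, hCker, sub_zero]
    have hP'x : ∀ x, P' x = P x - C x := fun x => rfl
    have hP'supp : ∀ x, P' x ≠ 0 → P x ≠ 0 ∧ C x = 0 := by
      intro x hx
      by_cases hCx : C x = 0
      · refine ⟨?_, hCx⟩
        rw [hP'x x, hCx, sub_zero] at hx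
        exact hx
      · exfalso
        apply hx
        rw [hP'x x, hconf x hCx, sub_self]
    have hP'simple : Simple P' := by
      intro x
      by_cases hCx : C x = 0
      · rw [hP'x x, hCx, sub_zero]; exact hPs x
      · right; left; rw [hP'x x, hconf x hCx, sub_self]
    obtain ⟨e, he⟩ := Function.ne_iff.mp hC0
    have heC : C e ≠ 0 := by simpa using he
    have hPe : P e ≠ 0 := by rw [← hconf e heC]; exact heC
    have hcard' : (Finset.univ.filter (fun x => P' x ≠ 0)).card ≤ k := by
      have hsub : Finset.univ.filter (fun x => P' x ≠ 0)
          ⊆ (Finset.univ.filter (fun x => P x ≠ 0)).erase e := by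
        intro x hx
        simp only [Finset.mem_filter, Finset.mem_univ, true_and, Finset.mem_erase] at hx ⊢
        refine ⟨?_, (hP'supp x hx).1⟩
        intro hxe
        apply hx
        rw [hxe, hP'x e, hconf e heC, sub_self]
      have h1 := Finset.card_le_card hsub
      have h2 : e ∈ Finset.univ.filter (fun x => P x ≠ 0) := by simpa using hPe
      have h3 := Finset.card_erase_of_mem h2
      omega
    obtain ⟨n, c, h1, h2, h3, h4⟩ := ih P' hP'ker hP'simple hcard'
    have hcsupp : ∀ i, ∀ x, c i x ≠ 0 → P' x ≠ 0 := by
      intro i x hx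
      rw [← h3 i x hx] at *
      exact hx
    refine ⟨n + 1, Fin.cons C c, ?_, ?_, ?_, ?_⟩
    · intro i
      refine Fin.cases ?_ ?_ i
      · exact hC
      · exact h1
    · intro i j hij
      rcases Fin.eq_zero_or_eq_succ i with rfl | ⟨i', rfl⟩ <;>
        rcases Fin.eq_zero_or_eq_succ j with rfl | ⟨j', rfl⟩
      · exact absurd rfl hij
      · simp only [Fin.cons_zero, Fin.cons_succ]
        apply Set.eq_empty_iff_forall_notMem.mpr
        rintro x ⟨hx1, hx2⟩
        exact hx1 (hP'supp x (hcsupp j' x hx2)).2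
      · simp only [Fin.cons_zero, Fin.cons_succ]
        apply Set.eq_empty_iff_forall_notMem.mpr
        rintro x ⟨hx1, hx2⟩
        exact hx2 (hP'supp x (hcsupp i' x hx1)).2
      · simp only [Fin.cons_succ]
        exact h2 (fun h => hij (congrArg Fin.succ h))
    · intro i
      refine Fin.cases ?_ ?_ i
      · intro x hx
        simp only [Fin.cons_zero] at *
        exact hconf x hx
      · intro i' x hx
        simp only [Fin.cons_succ] at *
        have hx' : c i' x ≠ 0 := hx
        have hCx : C x = 0 := (hP'supp x (hcsupp i' x hx')).2
        rw [h3 i' x hx, hP'x x, hCx, sub_zero]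
    · rw [Fin.sum_cons, ← h4]
      funext x
      simp [hP'x x]
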